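/- arXiv:2007.02782 — 3 statements merged into one kernel-verified Lean document; each statement's English description precedes it below -/
import Mathlib

section
/- Let p be a prime, ω ∈ ℂ a primitive p-th root of unity, A an m×n matrix over ℤ/p, b ∈ (ℤ/p)^m, and j ∈ {1,…,n}. If j ∈ V_i ∩ V_k for rows i,k, then in the game algebra 𝒜(syncLCS(A,b)) the elements ∑_{x∈S_i(A,b)} ω^{x_j} a_{i,x} and ∑_{y∈S_k(A,b)} ω^{y_j} a_{k,y} are equal. -/
set_option maxHeartbeats 1000000
noncomputable section

/-! ### The conjugate-linear star structure on a monoid algebra `ℂ[M]`,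
where `M` is a monoid with an (anti-multiplicative) star operation.
For a group `G` (with `star = ⁻¹`, see below) this is the usual star structure
`(λ·g)* = conj(λ)·g⁻¹` on the group `*`-algebra `ℂG`. -/

section MonoidAlgebraStar

variable {M : Type*} [Monoid M] [StarMul M]

/-- the star operation on `ℂ[M]`: `(λ·m)* = conj(λ)·(star m)` -/
noncomputable def mstar (f : MonoidAlgebra ℂ M) : MonoidAlgebra ℂ M :=
  MonoidAlgebra.ofCoeff (Finsupp.equivMapDomain ⟨star, star, star_involutive, star_involutive⟩
    (Finsupp.mapRange (starRingEnd ℂ) (map_zero _) f.coeff))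

lemma mstar_apply (f : MonoidAlgebra ℂ M) (x : M) :
    (mstar f).coeff x = starRingEnd ℂ (f.coeff (star x)) := rfl

lemma mstar_single (a : M) (c : ℂ) :
    mstar (MonoidAlgebra.single a c) = MonoidAlgebra.single (star a) (starRingEnd ℂ c) := by
  classical
  ext x
  show starRingEnd ℂ ((Finsupp.single a c) (star x)) =
    (Finsupp.single (star a) (starRingEnd ℂ c)) x
  simp only [Finsupp.single_apply]
  by_cases h : a = star x
  · rw [if_pos h, if_pos (by rw [h, star_star])]
  · rw [if_neg h, if_neg (fun h2 => h (by rw [← h2, star_star])), map_zero]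

lemma mstar_add (f g : MonoidAlgebra ℂ M) : mstar (f + g) = mstar f + mstar g := by
  ext x
  exact map_add (starRingEnd ℂ) (f.coeff (star x)) (g.coeff (star x))

lemma mstar_zero : mstar (0 : MonoidAlgebra ℂ M) = 0 := by
  ext x
  exact map_zero (starRingEnd ℂ)

lemma mstar_mul (f g : MonoidAlgebra ℂ M) : mstar (f * g) = mstar g * mstar f := by
  induction f using MonoidAlgebra.induction_linear with
  | zero =>
      exact (congrArg mstar (zero_mul g)).trans (mstar_zero.trans
        ((mul_zero (mstar g)).symm.trans (congrArg _ mstar_zero.symm)))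
  | add f1 f2 h1 h2 =>
      refine Eq.trans (congrArg mstar (@add_mul (MonoidAlgebra ℂ M) _ _ _ f1 f2 g)) ?_
      rw [mstar_add, h1, h2, ← mul_add]
      exact congrArg (mstar g * ·) (mstar_add f1 f2).symm
  | single a c =>
    induction g using MonoidAlgebra.induction_linear with
    | zero =>
        exact (congrArg mstar (mul_zero _)).trans (mstar_zero.trans
          ((zero_mul _).symm.trans (congrArg (· * _) mstar_zero.symm)))
    | add g1 g2 h1 h2 =>
        refine Eq.trans (congrArg mstar (@mul_add (MonoidAlgebra ℂ M) _ _ _ _ g1 g2)) ?_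
        rw [mstar_add, h1, h2, ← add_mul]
        exact congrArg (· * mstar (MonoidAlgebra.single a c)) (mstar_add g1 g2).symm
    | single b d =>
      show mstar ((MonoidAlgebra.single a c) * (MonoidAlgebra.single b d)) =
        mstar (MonoidAlgebra.single b d) * mstar (MonoidAlgebra.single a c)
      rw [MonoidAlgebra.single_mul_single, mstar_single, mstar_single, mstar_single,
        MonoidAlgebra.single_mul_single, star_mul, map_mul, mul_comm (starRingEnd ℂ d)]

/-- the `*`-ring structure of `ℂ[M]` -/
noncomputable instance instMAStar : StarRing (MonoidAlgebra ℂ M) where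
  star := mstar
  star_involutive f := by
    ext x
    calc (mstar (mstar f)).coeff x = starRingEnd ℂ (starRingEnd ℂ (f.coeff (star (star x)))) := rfl
      _ = f.coeff (star (star x)) := Complex.conj_conj _
      _ = f.coeff x := congrArg (fun y => f.coeff y) (star_star x)
  star_mul := mstar_mul
  star_add := mstar_add

lemma star_of' (a : M) :
    star (MonoidAlgebra.of ℂ M a) = MonoidAlgebra.of ℂ M (star a) := by
  show mstar _ = _
  rw [show (MonoidAlgebra.of ℂ M a : MonoidAlgebra ℂ M) = MonoidAlgebra.single a 1 from rfl,
    mstar_single, map_one]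
  rfl

end MonoidAlgebraStar

section LinearSystem

variable {p m n : ℕ}

/-- `V_i`, the support of the `i`-th row of `A` -/
def Vset (A : Matrix (Fin m) (Fin n) (ZMod p)) (i : Fin m) : Finset (Fin n) :=
  Finset.univ.filter fun j => A i j ≠ 0

/-- `S_i(A,b)`: solutions of the `i`-th equation supported inside `V_i` -/
def Ssol [NeZero p] (A : Matrix (Fin m) (Fin n) (ZMod p)) (b : Fin m → ZMod p) (i : Fin m) :
    Finset (Fin n → ZMod p) :=
  Finset.univ.filter fun x => (∑ j, A i j * x j) = b i ∧ ∀ j, x j ≠ 0 → j ∈ Vset A i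

/-- `(x,y)` are incompatible solutions for rows `(i,k)` -/
def Incompat (A : Matrix (Fin m) (Fin n) (ZMod p)) (i k : Fin m)
    (x y : Fin n → ZMod p) : Prop :=
  ∃ j ∈ Vset A i ∩ Vset A k, x j ≠ y j

lemma Incompat.symm {A : Matrix (Fin m) (Fin n) (ZMod p)} {i k : Fin m}
    {x y : Fin n → ZMod p} (h : Incompat A i k x y) : Incompat A k i y x := by
  obtain ⟨j, hj, hne⟩ := h
  exact ⟨j, by simpa [Finset.mem_inter, and_comm] using hj, hne.symm⟩

end LinearSystem

section GameAlgebra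

variable {p m n : ℕ}

/-- the index set of the generators `a_{i,x}` of the game algebra: pairs `(i, x)` with
`x ∈ S_i(A,b)` -/
abbrev SyncGen [NeZero p] (A : Matrix (Fin m) (Fin n) (ZMod p)) (b : Fin m → ZMod p) : Type _ :=
  Σ i : Fin m, {x : Fin n → ZMod p // x ∈ Ssol A b i}

/-- the free unital complex `*`-algebra on a set `X` of self-adjoint generators -/
abbrev FreeStarAlg (X : Type*) := MonoidAlgebra ℂ (FreeMonoid X)

/-- a generator of the free `*`-algebra -/
noncomputable def Xg {X : Type*} (x : X) : FreeStarAlg X :=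
  MonoidAlgebra.of ℂ (FreeMonoid X) (FreeMonoid.of x)

lemma starX {X : Type*} (x : X) : star (Xg x) = Xg x := by
  rw [Xg, star_of', FreeMonoid.star_of]

/-- the defining relations of the game algebra `𝒜(syncLCS(A,b))`: the generators are
self-adjoint (automatic here) idempotents, for each row the generators sum to one, and
incompatible pairs are orthogonal. -/
inductive SyncRel [NeZero p] (A : Matrix (Fin m) (Fin n) (ZMod p)) (b : Fin m → ZMod p) :
    FreeStarAlg (SyncGen A b) → FreeStarAlg (SyncGen A b) → Prop
  | idem (g : SyncGen A b) : SyncRel A b (Xg g * Xg g) (Xg g)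
  | sum_one (i : Fin m) :
      SyncRel A b (∑ x ∈ (Ssol A b i).attach, Xg (⟨i, x⟩ : SyncGen A b)) 1
  | orth {i k : Fin m} (x : {x // x ∈ Ssol A b i}) (y : {y // y ∈ Ssol A b k})
      (h : Incompat A i k x.1 y.1) :
      SyncRel A b (Xg (⟨i, x⟩ : SyncGen A b) * Xg (⟨k, y⟩ : SyncGen A b)) 0

lemma SyncRel.star_closed [NeZero p] (A : Matrix (Fin m) (Fin n) (ZMod p)) (b : Fin m → ZMod p) :
    ∀ a c, SyncRel A b a c → SyncRel A b (star a) (star c) := by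
  intro a c h
  cases h with
  | idem g => rw [star_mul, starX]; exact SyncRel.idem g
  | sum_one i =>
      rw [star_sum, star_one]
      simp only [starX]
      exact SyncRel.sum_one i
  | orth x y h =>
      rw [star_mul, starX, starX, star_zero]
      exact SyncRel.orth y x h.symm

/-- The game algebra `𝒜(syncLCS(A,b))`: the quotient of the free `*`-algebra on the
generators `a_{i,x}` by the `*`-ideal generated by the game relations. -/
abbrev GameAlg [NeZero p] (A : Matrix (Fin m) (Fin n) (ZMod p)) (b : Fin m → ZMod p) :=
  RingQuot (SyncRel A b)

noncomputable instance [NeZero p] (A : Matrix (Fin m) (Fin n) (ZMod p)) (b : Fin m → ZMod p) :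
    StarRing (GameAlg A b) :=
  RingQuot.starRing _ (SyncRel.star_closed A b)

/-- the generator `a_{i,x}` of the game algebra `𝒜(syncLCS(A,b))` -/
noncomputable def agen [NeZero p] (A : Matrix (Fin m) (Fin n) (ZMod p)) (b : Fin m → ZMod p)
    (i : Fin m) (x : Fin n → ZMod p) (hx : x ∈ Ssol A b i) : GameAlg A b :=
  RingQuot.mkAlgHom ℂ (SyncRel A b) (Xg ⟨i, ⟨x, hx⟩⟩)

end GameAlgebra

/-- If `j ∈ V_i ∩ V_k` then `∑_{x ∈ S_i} ω^{x_j} a_{i,x} =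
∑_{y ∈ S_k} ω^{y_j} a_{k,y}` in the game algebra `𝒜(syncLCS(A,b))`. -/
theorem statement3 (p : ℕ) [Fact p.Prime] {m n : ℕ} (ω : ℂ) (hω : IsPrimitiveRoot ω p)
    (A : Matrix (Fin m) (Fin n) (ZMod p)) (b : Fin m → ZMod p)
    (j : Fin n) (i k : Fin m) (hi : j ∈ Vset A i) (hk : j ∈ Vset A k) :
    ∑ x ∈ (Ssol A b i).attach, (ω ^ ((x.1 j).val) : ℂ) • agen A b i x.1 x.2 =
    ∑ y ∈ (Ssol A b k).attach, (ω ^ ((y.1 j).val) : ℂ) • agen A b k y.1 y.2 := by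
  classical
  have hone : ∀ l : Fin m, ∑ x ∈ (Ssol A b l).attach, agen A b l x.1 x.2 = 1 := by
    intro l
    have := RingQuot.mkAlgHom_rel ℂ (SyncRel.sum_one (A := A) (b := b) l)
    simpa [map_sum, agen] using this
  have horth : ∀ (x : {x // x ∈ Ssol A b i}) (y : {y // y ∈ Ssol A b k}),
      Incompat A i k x.1 y.1 → agen A b i x.1 x.2 * agen A b k y.1 y.2 = 0 := by
    intro x y h
    have := RingQuot.mkAlgHom_rel ℂ (SyncRel.orth x y h)
    simpa [map_mul, agen] using this
  calc ∑ x ∈ (Ssol A b i).attach, (ω ^ ((x.1 j).val) : ℂ) • agen A b i x.1 x.2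
      = (∑ x ∈ (Ssol A b i).attach, (ω ^ ((x.1 j).val) : ℂ) • agen A b i x.1 x.2) *
        (∑ y ∈ (Ssol A b k).attach, agen A b k y.1 y.2) := by rw [hone k, mul_one]
    _ = ∑ x ∈ (Ssol A b i).attach, ∑ y ∈ (Ssol A b k).attach,
        (ω ^ ((x.1 j).val) : ℂ) • (agen A b i x.1 x.2 * agen A b k y.1 y.2) := by
          rw [Finset.sum_mul_sum]; simp [smul_mul_assoc]
    _ = ∑ x ∈ (Ssol A b i).attach, ∑ y ∈ (Ssol A b k).attach,
        (ω ^ ((y.1 j).val) : ℂ) • (agen A b i x.1 x.2 * agen A b k y.1 y.2) := by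
          refine Finset.sum_congr rfl fun x _ => Finset.sum_congr rfl fun y _ => ?_
          by_cases h : Incompat A i k x.1 y.1
          · rw [horth x y h, smul_zero, smul_zero]
          · have hxy : x.1 j = y.1 j := by
              by_contra hne
              exact h ⟨j, Finset.mem_inter.mpr ⟨hi, hk⟩, hne⟩
            rw [hxy]
    _ = (∑ x ∈ (Ssol A b i).attach, agen A b i x.1 x.2) *
        (∑ y ∈ (Ssol A b k).attach, (ω ^ ((y.1 j).val) : ℂ) • agen A b k y.1 y.2) := by
          rw [Finset.sum_mul_sum]; simp [mul_smul_comm]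
    _ = _ := by rw [hone i, one_mul]

end
end

section
/- Let p be a prime, ω ∈ ℂ a primitive p-th root of unity, a ∈ (ℤ/p)^n a nonzero vector with support V := supp(a), c ∈ ℤ/p, and S := {x ∈ (ℤ/p)^n : a·x = c and supp(x) ⊆ V}. Let (λ_t)_{t∈ℤ/p} be a partition of V indexed by ℤ/p (with blocks allowed to be empty) having at least two nonempty blocks. Then ∑_{x∈S} ω^{−∑_{t∈ℤ/p} t·(∑_{j∈λ_t} a_j x_j)} = 0, where in the exponent t·(∑_{j∈λ_t} a_j x_j) is computed in ℤ/p using integer representatives t ∈ {0,…,p−1}. -/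
set_option maxHeartbeats 1000000
noncomputable section

/-- the solution set `S = {x : a·x = c and supp(x) ⊆ supp(a)}` of a single linear equation -/
def rowSols {p n : ℕ} [NeZero p] (a : Fin n → ZMod p) (c : ZMod p) :
    Finset (Fin n → ZMod p) :=
  Finset.univ.filter fun x => (∑ j, a j * x j) = c ∧ ∀ j, x j ≠ 0 → a j ≠ 0

/-- For a partition `(λ_t)_{t ∈ ℤ/p}` of `V = supp(a)` with at least two
nonempty blocks, `∑_{x ∈ S} ω^{-∑_t t·(∑_{j ∈ λ_t} a_j x_j)} = 0`. -/
theorem statement13 (p : ℕ) [Fact p.Prime] {n : ℕ} (ω : ℂ) (hω : IsPrimitiveRoot ω p)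
    (a : Fin n → ZMod p) (ha : a ≠ 0) (c : ZMod p)
    (lam : ZMod p → Finset (Fin n))
    (hdisj : ∀ s t : ZMod p, s ≠ t → Disjoint (lam s) (lam t))
    (hcover : Finset.univ.biUnion lam = Finset.univ.filter fun j => a j ≠ 0)
    (htwo : ∃ s t : ZMod p, s ≠ t ∧ (lam s).Nonempty ∧ (lam t).Nonempty) :
    ∑ x ∈ rowSols a c, (ω ^ (((- ∑ t : ZMod p, t * ∑ j ∈ lam t, a j * x j)).val) : ℂ) = 0 := by
  classical
  obtain ⟨s, t1, hst, ⟨j0, hj0⟩, ⟨j1, hj1⟩⟩ := htwo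
  have hmemV : ∀ t : ZMod p, ∀ j ∈ lam t, a j ≠ 0 := by
    intro t j hj
    have : j ∈ Finset.univ.filter fun j => a j ≠ 0 := by
      rw [← hcover]; exact Finset.mem_biUnion.mpr ⟨t, Finset.mem_univ _, hj⟩
    simpa using this
  have hVj0 : a j0 ≠ 0 := hmemV s j0 hj0
  have hVj1 : a j1 ≠ 0 := hmemV t1 j1 hj1
  have hj01 : j0 ≠ j1 := by
    intro h
    exact (Finset.disjoint_left.mp (hdisj s t1 hst) hj0) (h ▸ hj1)
  set u : Fin n → ZMod p :=
    fun j => if j = j0 then (a j0)⁻¹ else if j = j1 then -(a j1)⁻¹ else 0 with hu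
  have hau : ∀ j, a j * u j
      = (if j = j0 then 1 else 0) + (if j = j1 then (-1 : ZMod p) else 0) := by
    intro j
    by_cases h0 : j = j0
    · subst h0
      simp [hu, hj01, mul_inv_cancel₀ hVj0]
    · by_cases h1 : j = j1
      · subst h1
        simp [hu, h0, mul_inv_cancel₀ hVj1]
      · simp [hu, h0, h1]
  have hsupp_u : ∀ j, u j ≠ 0 → a j ≠ 0 := by
    intro j hj
    by_cases h0 : j = j0
    · subst h0; exact hVj0
    · by_cases h1 : j = j1
      · subst h1; exact hVj1
      · exfalso; apply hj; simp [hu, h0, h1]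
  have hu0 : ∑ j, a j * u j = 0 := by
    simp only [hau, Finset.sum_add_distrib]
    rw [Finset.sum_ite_eq' Finset.univ j0 (fun _ => (1 : ZMod p)),
        Finset.sum_ite_eq' Finset.univ j1 (fun _ => (-1 : ZMod p))]
    simp
  set F : (Fin n → ZMod p) → ZMod p :=
    fun x => ∑ t : ZMod p, t * ∑ j ∈ lam t, a j * x j with hF
  have hFadd : ∀ x : Fin n → ZMod p, F (x + u) = F x + F u := by
    intro x
    simp only [hF, Pi.add_apply, mul_add, Finset.sum_add_distrib]
  have hFsub : ∀ x : Fin n → ZMod p, F (x - u) = F x - F u := by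
    intro x
    simp only [hF, Pi.sub_apply, mul_sub, Finset.sum_sub_distrib]
  have hFu : F u = s - t1 := by
    have h1 : ∀ t' : ZMod p, ∑ j ∈ lam t', a j * u j
        = (if j0 ∈ lam t' then (1 : ZMod p) else 0)
          + (if j1 ∈ lam t' then (-1 : ZMod p) else 0) := by
      intro t'
      simp only [hau, Finset.sum_add_distrib]
      rw [Finset.sum_ite_eq' (lam t') j0 (fun _ => (1 : ZMod p)),
          Finset.sum_ite_eq' (lam t') j1 (fun _ => (-1 : ZMod p))]
    simp only [hF, h1, mul_add, Finset.sum_add_distrib, mul_ite, mul_one, mul_neg, mul_zero]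
    have e0 : ∑ t' : ZMod p, (if j0 ∈ lam t' then t' else 0) = s := by
      rw [Finset.sum_eq_single s]
      · simp [hj0]
      · intro t' _ hts
        have : j0 ∉ lam t' := fun h => (Finset.disjoint_left.mp (hdisj t' s hts) h) hj0
        simp [this]
      · simp
    have e1 : ∑ t' : ZMod p, (if j1 ∈ lam t' then -t' else 0) = -t1 := by
      rw [Finset.sum_eq_single t1]
      · simp [hj1]
      · intro t' _ hts
        have : j1 ∉ lam t' := fun h => (Finset.disjoint_left.mp (hdisj t' t1 hts) h) hj1
        simp [this]
      · simp
    rw [e0, e1]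
    ring
  have hd : F u ≠ 0 := by rw [hFu]; exact sub_ne_zero.mpr hst
  -- character arithmetic
  have hp1 : ω ^ p = 1 := hω.pow_eq_one
  have hmod : ∀ m : ℕ, ω ^ (m % p) = ω ^ m := by
    intro m
    conv_rhs => rw [← Nat.mod_add_div m p]
    rw [pow_add, pow_mul, hp1, one_pow, mul_one]
  have hchi_add : ∀ e f : ZMod p, ω ^ ((e + f).val) = ω ^ e.val * ω ^ f.val := by
    intro e f
    rw [ZMod.val_add, hmod, pow_add]
  -- the shift is a bijection on rowSols
  have hshift : ∀ x ∈ rowSols a c, x + u ∈ rowSols a c := by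
    intro x hx
    simp only [rowSols, Finset.mem_filter, Finset.mem_univ, true_and] at hx ⊢
    obtain ⟨hxc, hxs⟩ := hx
    constructor
    · simp only [Pi.add_apply, mul_add, Finset.sum_add_distrib, hxc, hu0, add_zero]
    · intro j hj
      by_cases h0 : x j = 0
      · apply hsupp_u
        intro h
        apply hj
        simp [Pi.add_apply, h0, h]
      · exact hxs j h0
  have hshift' : ∀ x ∈ rowSols a c, x - u ∈ rowSols a c := by
    intro x hx
    simp only [rowSols, Finset.mem_filter, Finset.mem_univ, true_and] at hx ⊢
    obtain ⟨hxc, hxs⟩ := hx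
    constructor
    · simp only [Pi.sub_apply, mul_sub, Finset.sum_sub_distrib, hxc, hu0, sub_zero]
    · intro j hj
      by_cases h0 : x j = 0
      · apply hsupp_u
        intro h
        apply hj
        simp [Pi.sub_apply, h0, h]
      · exact hxs j h0
  set T : ℂ := ∑ x ∈ rowSols a c, (ω ^ ((-F x).val) : ℂ) with hT
  have hreindex : T = ∑ x ∈ rowSols a c, (ω ^ ((-F (x + u)).val) : ℂ) := by
    rw [hT]
    refine Finset.sum_nbij' (fun x => x - u) (fun x => x + u) hshift' hshift ?_ ?_ ?_
    · intro x _; simp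
    · intro x _; simp
    · intro x hx
      congr 2
      rw [hFadd, hFsub]
      ring
  have hkey : T = T * ω ^ ((-F u).val) := by
    calc T = ∑ x ∈ rowSols a c, (ω ^ ((-F (x + u)).val) : ℂ) := hreindex
    _ = ∑ x ∈ rowSols a c, (ω ^ ((-F x).val) : ℂ) * ω ^ ((-F u).val) := by
        apply Finset.sum_congr rfl
        intro x _
        rw [hFadd, neg_add, hchi_add]
    _ = T * ω ^ ((-F u).val) := by rw [← Finset.sum_mul]
  have hne : (ω ^ ((-F u).val) : ℂ) ≠ 1 := by
    apply hω.pow_ne_one_of_pos_of_lt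
    · exact (ZMod.val_pos.mpr (neg_ne_zero.mpr hd)).ne'
    · exact ZMod.val_lt _
  have hT0 : T = 0 := by
    have h := hkey
    have h2 : T * (ω ^ ((-F u).val) - 1) = 0 := by linear_combination -h
    rcases mul_eq_zero.mp h2 with h3 | h3
    · exact h3
    · exact absurd (sub_eq_zero.mp h3) hne
  exact hT0

end
end

section
/- Let p be a prime, A an m×n matrix over ℤ/p and b ∈ (ℤ/p)^m, and assume the game algebra 𝒜(Iso(G_{A,b}, G_{A,0})) is hereditary (i.e., ∑_{i=1}^N x_i* x_i = 0 implies each x_i = 0). Then there exists a unital *-algebra homomorphism ψ : 𝒜(syncLCS(A,b)) → 𝒜(Iso(G_{A,b}, G_{A,0})) sending a_{i,x} to ∑_{k=1}^m e_{(i,x),(k,0)}, where e_{(i,x),(k,0)} is the generator corresponding to input vertex (i,x) of G_{A,b} and output vertex (k,0) of G_{A,0}. -/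
set_option maxHeartbeats 1000000
noncomputable section

section IsoGame

variable {p m n : ℕ}

/-- the graph `G_{A,b}`: vertices are pairs `(i,x)` with `x ∈ S_i(A,b)`, and two vertices
are adjacent iff they are incompatible solutions -/
def lsGraph [NeZero p] (A : Matrix (Fin m) (Fin n) (ZMod p)) (b : Fin m → ZMod p) :
    SimpleGraph (SyncGen A b) where
  Adj v w := Incompat A v.1 w.1 v.2.1 w.2.1
  symm := ⟨fun _ _ h => h.symm⟩
  loopless := ⟨fun v h => by obtain ⟨j, _, hne⟩ := h; exact hne rfl⟩

/-- the rule predicate of the graph isomorphism game `Iso(G,H)`: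
`IsoWin G H v w x y` holds iff on inputs `(v,w)` the answers `(x,y)` win, i.e.
`v,x` are in different graphs, `w,y` are in different graphs, and if `v,w` are in the
same graph then their relationship (equal / adjacent / distinct non-adjacent) is
satisfied by `x,y` as well. -/
def IsoWin {VG VH : Type*} (G : SimpleGraph VG) (H : SimpleGraph VH) :
    VG ⊕ VH → VG ⊕ VH → VG ⊕ VH → VG ⊕ VH → Prop
  | Sum.inl v, Sum.inl w, Sum.inr x, Sum.inr y => (v = w ↔ x = y) ∧ (G.Adj v w ↔ H.Adj x y)
  | Sum.inl _, Sum.inr _, Sum.inr _, Sum.inl _ => True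
  | Sum.inr _, Sum.inl _, Sum.inl _, Sum.inr _ => True
  | Sum.inr v, Sum.inr w, Sum.inl x, Sum.inl y => (v = w ↔ x = y) ∧ (H.Adj v w ↔ G.Adj x y)
  | _, _, _, _ => False

/-- the defining relations of the game algebra `𝒜(Iso(G,H))`: the generators
`e_{v,x}` (for an input `v` and an output `x`) are self-adjoint (automatic here)
idempotents, for every input the generators sum to one over all outputs, and losing
pairs are orthogonal (the relation set is closed under `*`). -/
inductive IsoRel {VG VH : Type*} [Fintype VG] [Fintype VH]
    (G : SimpleGraph VG) (H : SimpleGraph VH) :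
    FreeStarAlg ((VG ⊕ VH) × (VG ⊕ VH)) → FreeStarAlg ((VG ⊕ VH) × (VG ⊕ VH)) → Prop
  | idem (g : (VG ⊕ VH) × (VG ⊕ VH)) : IsoRel G H (Xg g * Xg g) (Xg g)
  | sum_one (v : VG ⊕ VH) : IsoRel G H (∑ x : VG ⊕ VH, Xg (v, x)) 1
  | orth {v w x y : VG ⊕ VH} (h : ¬ IsoWin G H v w x y) :
      IsoRel G H (Xg (v, x) * Xg (w, y)) 0
  | orth' {v w x y : VG ⊕ VH} (h : ¬ IsoWin G H v w x y) :
      IsoRel G H (Xg (w, y) * Xg (v, x)) 0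

lemma IsoRel.star_closed {VG VH : Type*} [Fintype VG] [Fintype VH]
    (G : SimpleGraph VG) (H : SimpleGraph VH) :
    ∀ a c, IsoRel G H a c → IsoRel G H (star a) (star c) := by
  intro a c h
  cases h with
  | idem g => rw [star_mul, starX]; exact IsoRel.idem g
  | sum_one v =>
      rw [star_sum, star_one]
      simp only [starX]
      exact IsoRel.sum_one v
  | orth h => rw [star_mul, starX, starX, star_zero]; exact IsoRel.orth' h
  | orth' h => rw [star_mul, starX, starX, star_zero]; exact IsoRel.orth h

/-- The game algebra `𝒜(Iso(G,H))` of the graph isomorphism game. -/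
abbrev IsoAlg {VG VH : Type*} [Fintype VG] [Fintype VH]
    (G : SimpleGraph VG) (H : SimpleGraph VH) :=
  RingQuot (IsoRel G H)

noncomputable instance {VG VH : Type*} [Fintype VG] [Fintype VH]
    (G : SimpleGraph VG) (H : SimpleGraph VH) : StarRing (IsoAlg G H) :=
  RingQuot.starRing _ (IsoRel.star_closed G H)

/-- the generator `e_{v,x}` of `𝒜(Iso(G,H))` for input `v` and output `x` -/
noncomputable def egen {VG VH : Type*} [Fintype VG] [Fintype VH]
    (G : SimpleGraph VG) (H : SimpleGraph VH) (v x : VG ⊕ VH) : IsoAlg G H :=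
  RingQuot.mkAlgHom ℂ (IsoRel G H) (Xg (v, x))

/-- `(i, 0)` is a vertex of `G_{A,0}` -/
lemma zero_mem_Ssol [NeZero p] (A : Matrix (Fin m) (Fin n) (ZMod p)) (k : Fin m) :
    (0 : Fin n → ZMod p) ∈ Ssol A (0 : Fin m → ZMod p) k := by
  simp [Ssol]

end IsoGame

section Aux

variable {VG VH : Type*} [Fintype VG] [Fintype VH] (G : SimpleGraph VG) (H : SimpleGraph VH)

lemma star_mkAlgHom_iso (a : FreeStarAlg ((VG ⊕ VH) × (VG ⊕ VH))) :
    star (RingQuot.mkAlgHom ℂ (IsoRel G H) a) = RingQuot.mkAlgHom ℂ (IsoRel G H) (star a) := by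
  have h1 : ∀ x, RingQuot.mkAlgHom ℂ (IsoRel G H) x
      = (⟨Quot.mk _ x⟩ : RingQuot (IsoRel G H)) := by
    intro x
    rw [RingQuot.mkAlgHom_def]
    show RingQuot.mkRingHom (IsoRel G H) x = _
    rw [RingQuot.mkRingHom_def]
    rfl
  rw [h1, h1]
  rfl

lemma egen_star (v x : VG ⊕ VH) : star (egen G H v x) = egen G H v x := by
  rw [egen, star_mkAlgHom_iso, starX]

lemma egen_idem (v x : VG ⊕ VH) : egen G H v x * egen G H v x = egen G H v x := by
  rw [egen, ← map_mul]
  exact RingQuot.mkAlgHom_rel ℂ (IsoRel.idem (v, x))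

lemma egen_orth {v w x y : VG ⊕ VH} (h : ¬ IsoWin G H v w x y) :
    egen G H v x * egen G H w y = 0 := by
  rw [egen, egen, ← map_mul, RingQuot.mkAlgHom_rel ℂ (IsoRel.orth h), map_zero]

lemma egen_sum (v : VG ⊕ VH) : ∑ x : VG ⊕ VH, egen G H v x = 1 := by
  simp only [egen, ← map_sum]
  rw [RingQuot.mkAlgHom_rel ℂ (IsoRel.sum_one v), map_one]

lemma egen_col_orth {v w : VG ⊕ VH} (y : VG ⊕ VH) (hvw : v ≠ w) :
    egen G H v y * egen G H w y = 0 := by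
  refine egen_orth G H ?_
  rcases v with v | v <;> rcases w with w | w <;> rcases y with y | y <;>
    simp_all [IsoWin]

lemma egen_inr_inr (v w : VH) : egen G H (Sum.inr v) (Sum.inr w) = 0 := by
  rw [← egen_idem]
  exact egen_orth G H (by simp [IsoWin])

lemma egen_inl_inl (v w : VG) : egen G H (Sum.inl v) (Sum.inl w) = 0 := by
  rw [← egen_idem]
  exact egen_orth G H (by simp [IsoWin])

/-- column sums are 1, given a hereditary game algebra -/
lemma egen_col_sum
    (hered : ∀ (N : ℕ) (xs : Fin N → IsoAlg G H),
      ∑ i, star (xs i) * xs i = 0 → ∀ i, xs i = 0)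
    (y : VG ⊕ VH) : ∑ v : VG ⊕ VH, egen G H v y = 1 := by
  classical
  set q : (VG ⊕ VH) → IsoAlg G H := fun y => ∑ v : VG ⊕ VH, egen G H v y with hq
  have hqq : ∀ y, q y * q y = q y := by
    intro y
    rw [hq]
    simp only
    rw [Finset.sum_mul_sum]
    refine Finset.sum_congr rfl fun v _ => ?_
    rw [Fintype.sum_eq_single v fun w hw => egen_col_orth G H y (Ne.symm hw)]
    exact egen_idem G H v y
  have hqstar : ∀ y, star (q y) = q y := by
    intro y
    rw [hq]
    simp only [star_sum]
    exact Finset.sum_congr rfl fun v _ => egen_star G H v y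
  have hsum0 : ∑ y : VG ⊕ VH, ((1 : IsoAlg G H) - q y) = 0 := by
    rw [Finset.sum_sub_distrib]
    have : ∑ y : VG ⊕ VH, q y = ∑ y : VG ⊕ VH, (1 : IsoAlg G H) := by
      rw [hq]
      simp only
      rw [Finset.sum_comm]
      exact Finset.sum_congr rfl fun v _ => egen_sum G H v
    rw [this, sub_self]
  have hproj : ∀ y, ((1 : IsoAlg G H) - q y) * (1 - q y) = 1 - q y := by
    intro y
    rw [sub_mul, one_mul, mul_sub, mul_one, hqq, sub_self, sub_zero]
  set e := (Fintype.equivFin (VG ⊕ VH)).symm with he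
  have key : ∀ i, (1 : IsoAlg G H) - q (e i) = 0 := by
    apply hered
    have : ∀ i, star ((1 : IsoAlg G H) - q (e i)) * (1 - q (e i)) = 1 - q (e i) := by
      intro i
      rw [star_sub, star_one, hqstar, hproj]
    rw [Finset.sum_congr rfl fun i _ => this i]
    rw [Equiv.sum_comp e (fun y => (1 : IsoAlg G H) - q y)]
    exact hsum0
  have := key ((Fintype.equivFin (VG ⊕ VH)) y)
  rw [he, Equiv.symm_apply_apply] at this
  exact (sub_eq_zero.mp this).symm

end Aux

lemma star_algebraMap_free {X : Type*} (c : ℂ) :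
    star (algebraMap ℂ (FreeStarAlg X) c) = algebraMap ℂ (FreeStarAlg X) (starRingEnd ℂ c) := by
  have h1 : ∀ d : ℂ, algebraMap ℂ (FreeStarAlg X) d = MonoidAlgebra.single 1 d := fun d => rfl
  rw [h1, h1, show star (MonoidAlgebra.single (1 : FreeMonoid X) c)
    = mstar (MonoidAlgebra.single 1 c) from rfl, mstar_single, star_one]

section Aux2

variable {p m n : ℕ} [Fact p.Prime]

lemma star_mkAlgHom_sync (A : Matrix (Fin m) (Fin n) (ZMod p)) (b : Fin m → ZMod p)
    (a : FreeStarAlg (SyncGen A b)) :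
    star (RingQuot.mkAlgHom ℂ (SyncRel A b) a) = RingQuot.mkAlgHom ℂ (SyncRel A b) (star a) := by
  have h1 : ∀ x, RingQuot.mkAlgHom ℂ (SyncRel A b) x
      = (⟨Quot.mk _ x⟩ : RingQuot (SyncRel A b)) := by
    intro x
    rw [RingQuot.mkAlgHom_def]
    show RingQuot.mkRingHom (SyncRel A b) x = _
    rw [RingQuot.mkRingHom_def]
    rfl
  rw [h1, h1]
  rfl

/-- `ψ(a_{i,x}) = ∑_k e_{(i,x),(k,0)}` -/
def Pgen (A : Matrix (Fin m) (Fin n) (ZMod p)) (b : Fin m → ZMod p) (g : SyncGen A b) :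
    IsoAlg (lsGraph A b) (lsGraph A (0 : Fin m → ZMod p)) :=
  ∑ k : Fin m, egen (lsGraph A b) (lsGraph A (0 : Fin m → ZMod p))
    (Sum.inl g) (Sum.inr ⟨k, ⟨0, zero_mem_Ssol A k⟩⟩)

lemma same_row_incompat {A : Matrix (Fin m) (Fin n) (ZMod p)} {b : Fin m → ZMod p}
    {i : Fin m} {x y : Fin n → ZMod p} (hx : x ∈ Ssol A b i) (hy : y ∈ Ssol A b i)
    (hxy : x ≠ y) : Incompat A i i x y := by
  by_contra h
  apply hxy
  simp only [Incompat, not_exists, not_and, Finset.mem_inter, and_self, ne_eq, not_not] at h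
  obtain ⟨-, -, hsx⟩ := Finset.mem_filter.mp hx
  obtain ⟨-, -, hsy⟩ := Finset.mem_filter.mp hy
  funext j
  by_cases hj : j ∈ Vset A i
  · exact h j hj
  · have h1 : x j = 0 := by by_contra h0; exact hj (hsx j h0)
    have h2 : y j = 0 := by by_contra h0; exact hj (hsy j h0)
    rw [h1, h2]

lemma not_adj_zero (A : Matrix (Fin m) (Fin n) (ZMod p)) (s t : Fin m) :
    ¬ (lsGraph A (0 : Fin m → ZMod p)).Adj
      ⟨s, ⟨0, zero_mem_Ssol A s⟩⟩ ⟨t, ⟨0, zero_mem_Ssol A t⟩⟩ := by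
  intro h
  obtain ⟨j, -, hne⟩ := (h : Incompat A s t 0 0)
  exact hne rfl

lemma Pgen_orth {A : Matrix (Fin m) (Fin n) (ZMod p)} {b : Fin m → ZMod p}
    {g g' : SyncGen A b} (h : (lsGraph A b).Adj g g') :
    Pgen A b g * Pgen A b g' = 0 := by
  classical
  rw [Pgen, Pgen, Finset.sum_mul_sum]
  refine Finset.sum_eq_zero fun s _ => Finset.sum_eq_zero fun t _ => ?_
  by_cases hst : s = t
  · subst hst
    exact egen_col_orth _ _ _ (fun he => (lsGraph A b).loopless.irrefl g' (Sum.inl.inj he ▸ h))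
  · refine egen_orth _ _ fun hw => ?_
    exact not_adj_zero A s t (hw.2.mp h)

lemma Pgen_idem (A : Matrix (Fin m) (Fin n) (ZMod p)) (b : Fin m → ZMod p)
    (g : SyncGen A b) : Pgen A b g * Pgen A b g = Pgen A b g := by
  classical
  rw [Pgen, Finset.sum_mul_sum]
  refine Finset.sum_congr rfl fun s _ => ?_
  rw [Fintype.sum_eq_single s fun t hts => ?_]
  · exact egen_idem _ _ _ _
  · refine egen_orth _ _ fun hw => ?_
    exact hts (congrArg Sigma.fst (hw.1.mp rfl)).symm

lemma Pgen_star (A : Matrix (Fin m) (Fin n) (ZMod p)) (b : Fin m → ZMod p)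
    (g : SyncGen A b) : star (Pgen A b g) = Pgen A b g := by
  rw [Pgen, star_sum]
  exact Finset.sum_congr rfl fun k _ => egen_star _ _ _ _

lemma Pgen_row_sum (A : Matrix (Fin m) (Fin n) (ZMod p)) (b : Fin m → ZMod p)
    (hered : ∀ (N : ℕ) (xs : Fin N → IsoAlg (lsGraph A b) (lsGraph A (0 : Fin m → ZMod p))),
      ∑ i, star (xs i) * xs i = 0 → ∀ i, xs i = 0)
    (i : Fin m) :
    ∑ x ∈ (Ssol A b i).attach, Pgen A b ⟨i, x⟩ = 1 := by
  classical
  set G := lsGraph A b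
  set H := lsGraph A (0 : Fin m → ZMod p)
  set Q : Fin m → IsoAlg G H := fun j => ∑ x ∈ (Ssol A b j).attach, Pgen A b ⟨j, x⟩ with hQ
  have hQQ : ∀ j, Q j * Q j = Q j := by
    intro j
    rw [hQ]
    simp only
    rw [Finset.sum_mul_sum]
    refine Finset.sum_congr rfl fun x _ => ?_
    rw [Finset.sum_eq_single_of_mem x (Finset.mem_attach _ x) fun y _ hyx => ?_]
    · exact Pgen_idem A b _
    · refine Pgen_orth (show (lsGraph A b).Adj ⟨j, x⟩ ⟨j, y⟩ from
        same_row_incompat x.2 y.2 fun hc => hyx (Subtype.ext hc.symm))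
  have hQstar : ∀ j, star (Q j) = Q j := by
    intro j
    rw [hQ]
    simp only [star_sum]
    exact Finset.sum_congr rfl fun x _ => Pgen_star A b _
  have hQsum : ∑ j : Fin m, Q j = ∑ _j : Fin m, (1 : IsoAlg G H) := by
    have hsig : ∀ k : Fin m,
        (∑ g : SyncGen A b, egen G H (Sum.inl g) (Sum.inr ⟨k, ⟨0, zero_mem_Ssol A k⟩⟩)) =
        ∑ j : Fin m, ∑ x ∈ (Ssol A b j).attach,
          egen G H (Sum.inl ⟨j, x⟩) (Sum.inr ⟨k, ⟨0, zero_mem_Ssol A k⟩⟩) := by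
      intro k
      rw [← Finset.univ_sigma_univ, Finset.sum_sigma]
      exact Finset.sum_congr rfl fun j _ => by rw [Finset.univ_eq_attach]
    have hswap : ∑ j : Fin m, Q j =
        ∑ k : Fin m, ∑ g : SyncGen A b,
          egen G H (Sum.inl g) (Sum.inr ⟨k, ⟨0, zero_mem_Ssol A k⟩⟩) := by
      calc ∑ j : Fin m, Q j
          = ∑ j : Fin m, ∑ k : Fin m, ∑ x ∈ (Ssol A b j).attach,
              egen G H (Sum.inl ⟨j, x⟩) (Sum.inr ⟨k, ⟨0, zero_mem_Ssol A k⟩⟩) := by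
            refine Finset.sum_congr rfl fun j _ => ?_
            rw [hQ]
            simp only [Pgen]
            exact Finset.sum_comm
        _ = ∑ k : Fin m, ∑ j : Fin m, ∑ x ∈ (Ssol A b j).attach,
              egen G H (Sum.inl ⟨j, x⟩) (Sum.inr ⟨k, ⟨0, zero_mem_Ssol A k⟩⟩) :=
            Finset.sum_comm
        _ = ∑ k : Fin m, ∑ g : SyncGen A b,
              egen G H (Sum.inl g) (Sum.inr ⟨k, ⟨0, zero_mem_Ssol A k⟩⟩) :=
            Finset.sum_congr rfl fun k _ => (hsig k).symm
    rw [hswap]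
    refine Finset.sum_congr rfl fun k _ => ?_
    have hcol := egen_col_sum G H hered (Sum.inr ⟨k, ⟨0, zero_mem_Ssol A k⟩⟩)
    rw [Fintype.sum_sum_type] at hcol
    have hz : ∑ h : SyncGen A (0 : Fin m → ZMod p),
        egen G H (Sum.inr h) (Sum.inr ⟨k, ⟨0, zero_mem_Ssol A k⟩⟩) = 0 :=
      Finset.sum_eq_zero fun h _ => egen_inr_inr G H h _
    rw [hz, add_zero] at hcol
    exact hcol
  have hproj : ∀ j, ((1 : IsoAlg G H) - Q j) * (1 - Q j) = 1 - Q j := by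
    intro j
    rw [sub_mul, one_mul, mul_sub, mul_one, hQQ, sub_self, sub_zero]
  have key : ∀ j, (1 : IsoAlg G H) - Q j = 0 := by
    apply hered
    have heach : ∀ j, star ((1 : IsoAlg G H) - Q j) * (1 - Q j) = 1 - Q j := by
      intro j
      rw [star_sub, star_one, hQstar, hproj]
    rw [Finset.sum_congr rfl fun j _ => heach j, Finset.sum_sub_distrib, hQsum, sub_self]
  exact (sub_eq_zero.mp (key i)).symm

end Aux2

/-- If the game algebra `𝒜(Iso(G_{A,b},G_{A,0}))` is hereditary, then
there is a unital `*`-homomorphism `ψ : 𝒜(syncLCS(A,b)) → 𝒜(Iso(G_{A,b},G_{A,0}))` with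
`ψ(a_{i,x}) = ∑_{k=1}^m e_{(i,x),(k,0)}`. -/
theorem statement19 (p : ℕ) [Fact p.Prime] {m n : ℕ} (A : Matrix (Fin m) (Fin n) (ZMod p))
    (b : Fin m → ZMod p)
    (hered : ∀ (N : ℕ) (xs : Fin N → IsoAlg (lsGraph A b) (lsGraph A (0 : Fin m → ZMod p))),
      ∑ i, star (xs i) * xs i = 0 → ∀ i, xs i = 0) :
    ∃ ψ : GameAlg A b →⋆ₐ[ℂ] IsoAlg (lsGraph A b) (lsGraph A (0 : Fin m → ZMod p)),
      ∀ (i : Fin m) (x : Fin n → ZMod p) (hx : x ∈ Ssol A b i),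
        ψ (agen A b i x hx) =
          ∑ k : Fin m, egen (lsGraph A b) (lsGraph A (0 : Fin m → ZMod p))
            (Sum.inl ⟨i, ⟨x, hx⟩⟩) (Sum.inr ⟨k, ⟨0, zero_mem_Ssol A k⟩⟩) := by
  classical
  let φ : FreeStarAlg (SyncGen A b) →ₐ[ℂ]
      IsoAlg (lsGraph A b) (lsGraph A (0 : Fin m → ZMod p)) :=
    (MonoidAlgebra.lift ℂ _ (FreeMonoid (SyncGen A b))) (FreeMonoid.lift (Pgen A b))
  have hφof : ∀ w : FreeMonoid (SyncGen A b),
      φ (MonoidAlgebra.of ℂ (FreeMonoid (SyncGen A b)) w) = FreeMonoid.lift (Pgen A b) w :=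
    fun w => MonoidAlgebra.lift_of _ w
  have hφX : ∀ g, φ (Xg g) = Pgen A b g := fun g => by
    rw [Xg, hφof, FreeMonoid.lift_eval_of]
  have hrel : ∀ u v, SyncRel A b u v → φ u = φ v := by
    intro u v h
    cases h with
    | idem g => rw [map_mul, hφX, Pgen_idem]
    | sum_one i =>
        rw [map_sum, map_one]
        rw [Finset.sum_congr rfl fun x _ => hφX _]
        exact Pgen_row_sum A b hered i
    | orth x y h =>
        rw [map_mul, map_zero, hφX, hφX]
        exact Pgen_orth h
  let ψ0 : GameAlg A b →ₐ[ℂ] IsoAlg (lsGraph A b) (lsGraph A (0 : Fin m → ZMod p)) :=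
    RingQuot.liftAlgHom ℂ ⟨φ, hrel⟩
  have hψ0 : ∀ a, ψ0 (RingQuot.mkAlgHom ℂ (SyncRel A b) a) = φ a := fun a =>
    RingQuot.liftAlgHom_mkAlgHom_apply ℂ φ hrel a
  have hMstar : ∀ w : FreeMonoid (SyncGen A b),
      FreeMonoid.lift (Pgen A b) (star w) = star (FreeMonoid.lift (Pgen A b) w) := by
    intro w
    induction w using FreeMonoid.recOn with
    | one => rw [star_one, map_one, star_one]
    | of_mul x xs ih =>
        rw [star_mul, FreeMonoid.star_of, map_mul, map_mul, FreeMonoid.lift_eval_of,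
          ih, star_mul, Pgen_star]
  have halgF : ∀ c : ℂ,
      star (algebraMap ℂ (FreeStarAlg (SyncGen A b)) c)
        = algebraMap ℂ (FreeStarAlg (SyncGen A b)) (starRingEnd ℂ c) :=
    fun c => star_algebraMap_free c
  have halg : ∀ c : ℂ,
      star (algebraMap ℂ (IsoAlg (lsGraph A b) (lsGraph A (0 : Fin m → ZMod p))) c)
        = algebraMap ℂ (IsoAlg (lsGraph A b) (lsGraph A (0 : Fin m → ZMod p)))
          (starRingEnd ℂ c) := by
    intro c
    rw [← AlgHom.commutes (RingQuot.mkAlgHom ℂ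
        (IsoRel (lsGraph A b) (lsGraph A (0 : Fin m → ZMod p)))) c,
      star_mkAlgHom_iso, star_algebraMap_free, AlgHom.commutes]
  have hφstar : ∀ f, φ (star f) = star (φ f) := by
    intro f
    induction f using MonoidAlgebra.induction_linear with
    | zero => rw [star_zero, map_zero, star_zero]
    | add f g hf hg => rw [star_add, map_add, map_add, star_add, hf, hg]
    | single a c =>
        have hsingle_eq : (MonoidAlgebra.single a c : FreeStarAlg (SyncGen A b))
            = algebraMap ℂ _ c * MonoidAlgebra.of ℂ (FreeMonoid (SyncGen A b)) a :=
          MonoidAlgebra.single_eq_algebraMap_mul_of a c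
        show φ (star (MonoidAlgebra.single a c)) = star (φ (MonoidAlgebra.single a c))
        rw [hsingle_eq, star_mul, star_of', halgF, map_mul, map_mul, AlgHom.commutes,
          AlgHom.commutes, hφof, hφof, hMstar, star_mul, halg]
  have hψstar : ∀ a : GameAlg A b, ψ0 (star a) = star (ψ0 a) := by
    intro a
    obtain ⟨f, rfl⟩ := RingQuot.mkAlgHom_surjective ℂ (SyncRel A b) a
    rw [star_mkAlgHom_sync, hψ0, hψ0, hφstar]
  refine ⟨{ toAlgHom := ψ0, map_star' := hψstar }, ?_⟩
  intro i x hx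
  show ψ0 (agen A b i x hx) = _
  rw [agen, hψ0, hφX]
  rfl

end
end
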